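/- For every real x ≥ 1 and every p ∈ (0,1], one has ((x^(p−1) + 1)/2)·(x−1) − (1/12)·(p−1)·(p−2)·(x−1)^3 ≤ (x^p − 1)/p ≤ ((x^(p−1) + 1)/2)·(x−1) − (1/12)·(p−1)·(p−2)·x^(p−3)·(x−1)^3. -/

import Mathlib

open Set

private lemma rpow_deriv' (q : ℝ) {t : ℝ} (ht : 0 < t) :
    HasDerivAt (fun s : ℝ => s ^ q) (q * t ^ (q - 1)) t :=
  Real.hasDerivAt_rpow_const (Or.inl ht.ne')

private lemma aux_nonneg (f f' f'' : ℝ → ℝ)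
    (hd1 : ∀ x, 1 ≤ x → HasDerivAt f (f' x) x)
    (hd2 : ∀ x, 1 ≤ x → HasDerivAt f' (f'' x) x)
    (h0 : f 1 = 0) (h0' : f' 1 = 0)
    (hpos : ∀ x, 1 ≤ x → 0 ≤ f'' x) :
    ∀ x, 1 ≤ x → 0 ≤ f x := by
  have key : ∀ (g g' : ℝ → ℝ), (∀ x, 1 ≤ x → HasDerivAt g (g' x) x) →
      (∀ x, 1 ≤ x → 0 ≤ g' x) → MonotoneOn g (Set.Ici 1) := by
    intro g g' hg hg'
    apply monotoneOn_of_deriv_nonneg (convex_Ici 1)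
    · exact fun x hx => (hg x hx).continuousAt.continuousWithinAt
    · intro x hx
      rw [interior_Ici] at hx
      exact ((hg x hx.le).differentiableAt.differentiableWithinAt)
    · intro x hx
      rw [interior_Ici] at hx
      rw [(hg x hx.le).deriv]
      exact hg' x hx.le
  have hmono' := key f' f'' hd2 hpos
  have hf'nn : ∀ x, 1 ≤ x → 0 ≤ f' x := fun x hx =>
    h0' ▸ hmono' Set.self_mem_Ici hx hx
  have hmono := key f f' hd1 hf'nn
  intro x hx
  calc (0:ℝ) = f 1 := h0.symm
  _ ≤ f x := hmono Set.self_mem_Ici hx hx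

theorem stmt6 (x p : ℝ) (hx : 1 ≤ x) (hp0 : 0 < p) (hp1 : p ≤ 1) :
    ((x ^ (p - 1) + 1) / 2) * (x - 1) - (1 / 12) * (p - 1) * (p - 2) * (x - 1) ^ (3 : ℕ)
        ≤ (x ^ p - 1) / p ∧
    (x ^ p - 1) / p ≤ ((x ^ (p - 1) + 1) / 2) * (x - 1)
        - (1 / 12) * (p - 1) * (p - 2) * x ^ (p - 3) * (x - 1) ^ (3 : ℕ) := by
  have hA : (0:ℝ) ≤ (p - 1) * (p - 2) := by nlinarith
  -- E' derivative of trapezoid error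
  have hE : ∀ t : ℝ, 1 ≤ t →
      HasDerivAt (fun s : ℝ => ((s ^ (p-1) + 1) / 2) * (s - 1) - (s ^ p - 1) / p)
        (((p-1) * t ^ (p-2) * (t-1) + 1 - t ^ (p-1)) / 2) t := by
    intro t ht
    have ht0 : (0:ℝ) < t := by linarith
    have h1 := rpow_deriv' (p-1) ht0
    have e1 : p - 1 - 1 = p - 2 := by ring
    rw [e1] at h1
    have h2 := rpow_deriv' p ht0
    have H := (((h1.add_const 1).div_const 2).mul ((hasDerivAt_id t).sub_const 1)).sub
      ((h2.sub_const 1).div_const p)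
    refine H.congr_deriv ?_
    simp only [id_eq]
    field_simp
    ring
  have hE' : ∀ t : ℝ, 1 ≤ t →
      HasDerivAt (fun s : ℝ => ((p-1) * s ^ (p-2) * (s-1) + 1 - s ^ (p-1)) / 2)
        ((p-1) * (p-2) * t ^ (p-3) * (t-1) / 2) t := by
    intro t ht
    have ht0 : (0:ℝ) < t := by linarith
    have h1 := rpow_deriv' (p-2) ht0
    have e1 : p - 2 - 1 = p - 3 := by ring
    rw [e1] at h1
    have h2 := rpow_deriv' (p-1) ht0
    have e2 : p - 1 - 1 = p - 2 := by ring
    rw [e2] at h2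
    have H := (((((h1.const_mul (p-1)).mul ((hasDerivAt_id t).sub_const 1)).add_const 1).sub
      h2).div_const 2)
    refine H.congr_deriv ?_
    simp only [id_eq]
    ring
  -- upper-deficit function u
  set A := (p-1) * (p-2) with hAdef
  have hu := aux_nonneg
    (fun s => (1/12) * (p-1) * (p-2) * (s-1) ^ (3:ℕ) - (((s ^ (p-1) + 1) / 2) * (s - 1) - (s ^ p - 1) / p))
    (fun s => (1/4) * (p-1) * (p-2) * (s-1) ^ (2:ℕ) - (((p-1) * s ^ (p-2) * (s-1) + 1 - s ^ (p-1)) / 2))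
    (fun s => (1/2) * (p-1) * (p-2) * (s-1) * (1 - s ^ (p-3)))
    (by
      intro t ht
      have H := (((((hasDerivAt_id t).sub_const 1).pow 3).const_mul ((1/12) * (p-1) * (p-2))).sub (hE t ht))
      refine H.congr_deriv ?_
      simp only [id_eq]
      push_cast
      ring)
    (by
      intro t ht
      have H := (((((hasDerivAt_id t).sub_const 1).pow 2).const_mul ((1/4) * (p-1) * (p-2))).sub (hE' t ht))
      refine H.congr_deriv ?_
      simp only [id_eq]
      push_cast
      ring)
    (by simp [Real.one_rpow])
    (by simp [Real.one_rpow])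
    (by
      intro t ht
      have h1 : t ^ (p-3) ≤ 1 := Real.rpow_le_one_of_one_le_of_nonpos ht (by linarith)
      beta_reduce
      have h2' : (0:ℝ) ≤ (1/2) * ((p-1)*(p-2)) * ((t-1) * (1 - t ^ (p-3))) := by
        apply mul_nonneg (by linarith)
        exact mul_nonneg (by linarith) (by linarith)
      have e : (1/2) * (p-1) * (p-2) * (t-1) * (1 - t ^ (p-3))
          = (1/2) * ((p-1)*(p-2)) * ((t-1) * (1 - t ^ (p-3))) := by ring
      rw [e]
      exact h2')
    x hx
  -- lower-deficit function v
  have hv := aux_nonneg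
    (fun s => (((s ^ (p-1) + 1) / 2) * (s - 1) - (s ^ p - 1) / p) - (1/12) * (p-1) * (p-2) * s ^ (p-3) * (s-1) ^ (3:ℕ))
    (fun s => (((p-1) * s ^ (p-2) * (s-1) + 1 - s ^ (p-1)) / 2) -
      (1/12) * (p-1) * (p-2) * ((p-3) * s ^ (p-4) * (s-1) ^ (3:ℕ) + s ^ (p-3) * (3 * (s-1) ^ (2:ℕ))))
    (fun s => (1/12) * (p-1) * (p-2) * (3-p) * s ^ (p-5) * (s-1) ^ (2:ℕ) * ((p+2) * s - (p-4)))
    (by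
      intro t ht
      have ht0 : (0:ℝ) < t := by linarith
      have h3 := rpow_deriv' (p-3) ht0
      have e3 : p - 3 - 1 = p - 4 := by ring
      rw [e3] at h3
      have H := (hE t ht).sub
        (((h3.mul (((hasDerivAt_id t).sub_const 1).pow 3)).const_mul ((1/12) * (p-1) * (p-2))))
      refine (H.congr_deriv ?_).congr_of_eventuallyEq (Filter.Eventually.of_forall fun s => ?_)
      · simp only [id_eq, Pi.pow_apply]
        push_cast
        ring
      · simp only [Pi.sub_apply, Pi.mul_apply, Pi.pow_apply, id_eq]
        ring)
    (by
      intro t ht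
      have ht0 : (0:ℝ) < t := by linarith
      have h4 := rpow_deriv' (p-4) ht0
      have e4 : p - 4 - 1 = p - 5 := by ring
      rw [e4] at h4
      have h3 := rpow_deriv' (p-3) ht0
      have e3 : p - 3 - 1 = p - 4 := by ring
      rw [e3] at h3
      have H := (hE' t ht).sub
        ((((h4.const_mul (p-3)).mul (((hasDerivAt_id t).sub_const 1).pow 3)).add
          (h3.mul ((((hasDerivAt_id t).sub_const 1).pow 2).const_mul 3))).const_mul
          ((1/12) * (p-1) * (p-2)))
      have r3 : t ^ (p-3) = t ^ (p-5) * t ^ (2:ℕ) := by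
        rw [show p - 3 = (p-5) + (2:ℕ) by push_cast; ring, Real.rpow_add ht0,
          Real.rpow_natCast]
      have r4 : t ^ (p-4) = t ^ (p-5) * t := by
        rw [show p - 4 = (p-5) + 1 by ring, Real.rpow_add ht0, Real.rpow_one]
      refine H.congr_deriv ?_
      beta_reduce
      simp only [id_eq, Pi.pow_apply]
      rw [r3, r4]
      push_cast
      ring)
    (by simp [Real.one_rpow])
    (by simp [Real.one_rpow])
    (by
      intro t ht
      have ht0 : (0:ℝ) < t := by linarith
      have h5 : (0:ℝ) ≤ t ^ (p-5) := (Real.rpow_pos_of_pos ht0 _).le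
      have h6 : (0:ℝ) ≤ (p+2) * t - (p-4) := by nlinarith
      beta_reduce
      have key : (0:ℝ) ≤ (1/12) * (((p-1)*(p-2)) * ((3-p) * (t ^ (p-5) *
          ((t-1) ^ (2:ℕ) * ((p+2) * t - (p-4)))))) := by
        apply mul_nonneg (by norm_num)
        exact mul_nonneg hA (mul_nonneg (by linarith)
          (mul_nonneg h5 (mul_nonneg (sq_nonneg _) h6)))
      have e : (1/12) * (p-1) * (p-2) * (3-p) * t ^ (p-5) * (t-1) ^ (2:ℕ) * ((p+2) * t - (p-4))
          = (1/12) * (((p-1)*(p-2)) * ((3-p) * (t ^ (p-5) *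
          ((t-1) ^ (2:ℕ) * ((p+2) * t - (p-4)))))) := by ring
      rw [e]
      exact key)
    x hx
  have hu2 : (0:ℝ) ≤ (1/12) * (p-1) * (p-2) * (x-1) ^ (3:ℕ) -
      (((x ^ (p-1) + 1) / 2) * (x - 1) - (x ^ p - 1) / p) := hu
  have hv2 : (0:ℝ) ≤ (((x ^ (p-1) + 1) / 2) * (x - 1) - (x ^ p - 1) / p) -
      (1/12) * (p-1) * (p-2) * x ^ (p-3) * (x-1) ^ (3:ℕ) := hv
  constructor <;> linarith
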